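/- Let I ⊆ S be a nilpotent ideal (I^N = 0 for some N ≥ 1) and let f ∈ S[G][U] be a polynomial with constant term 1, with f ≡ 1 mod I, and with f(1) = 1 (evaluating U at 1 in S[G]). Then there exist finitely many triples (a_j, z_j, g_j) with integers a_j ≥ 1, elements z_j ∈ I, and g_j ∈ G, such that f · ∏_j (1 − U^{a_j} z_j g_j) = ∏_j (1 − U^{a_j+1} z_j g_j) in S[G][U]; equivalently, f is a finite product of the units (1 − U^{a+1} z g)·(1 − U^{a} z g)^{−1} with a ≥ 1, z ∈ I, g ∈ G. -/

import Mathlib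

open Polynomial

namespace Stmt13Aux

variable {S : Type*} [CommRing S] {G : Type*} [Group G]

/-- coefficientwise (and coordinatewise) membership in an ideal -/
def Mem (J : Ideal S) (p : Polynomial (MonoidAlgebra S G)) : Prop :=
  ∀ (n : ℕ) (x : G), (p.coeff n).coeff x ∈ J

theorem Mem.zero (J : Ideal S) : Mem J (0 : Polynomial (MonoidAlgebra S G)) := by
  intro n x; simp

theorem Mem.add {J : Ideal S} {p q : Polynomial (MonoidAlgebra S G)}
    (hp : Mem J p) (hq : Mem J q) : Mem J (p + q) := by
  intro n x
  rw [Polynomial.coeff_add, MonoidAlgebra.coeff_add, Finsupp.add_apply]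
  exact J.add_mem (hp n x) (hq n x)

theorem Mem.neg {J : Ideal S} {p : Polynomial (MonoidAlgebra S G)}
    (hp : Mem J p) : Mem J (-p) := by
  intro n x
  rw [Polynomial.coeff_neg, MonoidAlgebra.coeff_neg, Finsupp.neg_apply]
  exact J.neg_mem (hp n x)

theorem Mem.sub {J : Ideal S} {p q : Polynomial (MonoidAlgebra S G)}
    (hp : Mem J p) (hq : Mem J q) : Mem J (p - q) := by
  rw [sub_eq_add_neg]; exact hp.add hq.neg

theorem Mem.mono {J K : Ideal S} (h : J ≤ K) {p : Polynomial (MonoidAlgebra S G)}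
    (hp : Mem J p) : Mem K p := fun n x => h (hp n x)

theorem Mem.top (p : Polynomial (MonoidAlgebra S G)) : Mem ⊤ p := fun _ _ => trivial

theorem ma_mul_mem {J K : Ideal S} {u v : MonoidAlgebra S G}
    (hu : ∀ x, u.coeff x ∈ J) (hv : ∀ x, v.coeff x ∈ K) (x : G) : (u * v).coeff x ∈ J * K := by
  classical
  rw [MonoidAlgebra.coeff_mul]
  refine Ideal.sum_mem _ fun a _ => Ideal.sum_mem _ fun b _ => ?_
  simp only []
  split_ifs
  · exact Ideal.mul_mem_mul (hu a) (hv b)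
  · exact zero_mem _

theorem Mem.mul_mem {J K : Ideal S} {p q : Polynomial (MonoidAlgebra S G)}
    (hp : Mem J p) (hq : Mem K q) : Mem (J * K) (p * q) := by
  intro n x
  rw [Polynomial.coeff_mul]
  rw [MonoidAlgebra.coeff_sum, Finset.sum_apply']
  exact Ideal.sum_mem _ fun ij _ => ma_mul_mem (hp ij.1) (hq ij.2) x

theorem Mem.mul_left {J : Ideal S} {p : Polynomial (MonoidAlgebra S G)}
    (q : Polynomial (MonoidAlgebra S G)) (hp : Mem J p) : Mem J (q * p) := by
  have := (Mem.top q).mul_mem hp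
  rwa [Ideal.top_mul] at this

theorem Mem.mul_right {J : Ideal S} {p : Polynomial (MonoidAlgebra S G)}
    (q : Polynomial (MonoidAlgebra S G)) (hp : Mem J p) : Mem J (p * q) := by
  have := hp.mul_mem (Mem.top q)
  rwa [Ideal.mul_top] at this

theorem Mem.list_sum {J : Ideal S} {α : Type*} (L : List α)
    (F : α → Polynomial (MonoidAlgebra S G)) (h : ∀ t ∈ L, Mem J (F t)) :
    Mem J (L.map F).sum := by
  induction L with
  | nil => simpa using Mem.zero J
  | cons t L ih =>
      rw [List.map_cons, List.sum_cons]
      exact (h t (by simp)).add (ih fun s hs => h s (by simp [hs]))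


/-- the difference term -/
noncomputable def Tt (t : ℕ × S × G) : Polynomial (MonoidAlgebra S G) :=
  (Polynomial.X ^ t.1 - Polynomial.X ^ (t.1 + 1)) * Polynomial.C (MonoidAlgebra.single t.2.2 t.2.1)

noncomputable def Pf (t : ℕ × S × G) : Polynomial (MonoidAlgebra S G) :=
  1 - Polynomial.X ^ t.1 * Polynomial.C (MonoidAlgebra.single t.2.2 t.2.1)

noncomputable def Qf (t : ℕ × S × G) : Polynomial (MonoidAlgebra S G) :=
  1 - Polynomial.X ^ (t.1 + 1) * Polynomial.C (MonoidAlgebra.single t.2.2 t.2.1)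

theorem Tt_eq (t : ℕ × S × G) : Tt t = Qf t - Pf t := by
  unfold Tt Qf Pf; rw [sub_mul]; abel

theorem single_coords {I : Ideal S} {z : S} (hz : z ∈ I) (g x : G) :
    (MonoidAlgebra.single g z : MonoidAlgebra S G).coeff x ∈ I := by
  classical
  rw [MonoidAlgebra.coeff_single_apply]
  split_ifs
  · exact hz
  · exact I.zero_mem

theorem mem_XpowC {I : Ideal S} {z : S} (hz : z ∈ I) (a : ℕ) (g : G) :
    Mem I (Polynomial.X ^ a * Polynomial.C (MonoidAlgebra.single g z)) := by
  intro n x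
  rw [Polynomial.X_pow_mul, Polynomial.C_mul_X_pow_eq_monomial, Polynomial.coeff_monomial]
  split_ifs
  · exact single_coords hz g x
  · simp


theorem mem_Tt {I : Ideal S} {t : ℕ × S × G} (hz : t.2.1 ∈ I) : Mem I (Tt t) := by
  unfold Tt
  rw [sub_mul]
  exact (mem_XpowC hz _ _).sub (mem_XpowC hz _ _)

theorem mem_Pf_sub_one {I : Ideal S} {t : ℕ × S × G} (hz : t.2.1 ∈ I) : Mem I (Pf t - 1) := by
  have : Pf t - 1 = -(Polynomial.X ^ t.1 * Polynomial.C (MonoidAlgebra.single t.2.2 t.2.1)) := by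
    unfold Pf; abel
  rw [this]
  exact (mem_XpowC hz _ _).neg

theorem mem_Qf_sub_one {I : Ideal S} {t : ℕ × S × G} (hz : t.2.1 ∈ I) : Mem I (Qf t - 1) := by
  have : Qf t - 1 = -(Polynomial.X ^ (t.1 + 1) * Polynomial.C (MonoidAlgebra.single t.2.2 t.2.1)) := by
    unfold Qf; abel
  rw [this]
  exact (mem_XpowC hz _ _).neg

/-- the product of `1 + (small)` is `1 + (sum of smalls) + (smaller)` -/
theorem prod_sub {α : Type*} (J : Ideal S) (L : List α)
    (F : α → Polynomial (MonoidAlgebra S G))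
    (h : ∀ t ∈ L, Mem J (F t - 1)) :
    Mem (J * J) ((L.map F).prod - 1 - (L.map fun t => F t - 1).sum) := by
  induction L with
  | nil => simpa using Mem.zero _
  | cons p L ih =>
      rw [List.map_cons, List.prod_cons, List.map_cons, List.sum_cons]
      have hL : ∀ q ∈ L, Mem J (F q - 1) := fun q hq => h q (by simp [hq])
      have ihL := ih hL
      have hsum : Mem J (L.map fun t => F t - 1).sum :=
        Mem.list_sum L _ fun q hq => h q (by simp [hq])
      have hprod : Mem J ((L.map F).prod - 1) := by
        have : (L.map F).prod - 1
            = ((L.map F).prod - 1 - (L.map fun t => F t - 1).sum)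
              + (L.map fun t => F t - 1).sum := by abel
        rw [this]
        exact (ihL.mono Ideal.mul_le_left).add hsum
      have key : F p * (L.map F).prod - 1 - ((F p - 1) + (L.map fun t => F t - 1).sum)
          = (F p - 1) * ((L.map F).prod - 1)
            + ((L.map F).prod - 1 - (L.map fun t => F t - 1).sum) := by
        rw [sub_mul, mul_sub, one_mul, mul_one]; abel
      rw [key]
      exact ((h p (by simp)).mul_mem hprod).add ihL

theorem sum_map_sub {α : Type*} (L : List α)
    (A B : α → Polynomial (MonoidAlgebra S G)) :
    (L.map fun t => A t - B t).sum = (L.map A).sum - (L.map B).sum := by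
  induction L with
  | nil => simp
  | cons t L ih => simp only [List.map_cons, List.sum_cons, ih]; abel

/-- Key congruence: `f * ∏ Pf ≡ ∏ Qf mod I²`. -/
theorem key_congruence (I : Ideal S) (f : Polynomial (MonoidAlgebra S G))
    (L : List (ℕ × S × G)) (hz : ∀ t ∈ L, t.2.1 ∈ I)
    (hf : f = 1 + (L.map Tt).sum) :
    Mem (I * I) (f * (L.map Pf).prod - (L.map Qf).prod) := by
  set Sp := (L.map fun t => Pf t - 1).sum with hSpdef
  set Sq := (L.map fun t => Qf t - 1).sum with hSqdef
  have hSp : Mem I Sp := Mem.list_sum L _ fun t ht => mem_Pf_sub_one (hz t ht)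
  have hSq : Mem I Sq := Mem.list_sum L _ fun t ht => mem_Qf_sub_one (hz t ht)
  have hT : (L.map Tt).sum = Sq - Sp := by
    rw [hSpdef, hSqdef, ← sum_map_sub]
    congr 1
    exact List.map_congr_left fun t _ => by rw [sub_sub_sub_cancel_right]; exact Tt_eq t
  set EP := (L.map Pf).prod - 1 - Sp with hEPdef
  set EQ := (L.map Qf).prod - 1 - Sq with hEQdef
  have hEP : Mem (I * I) EP :=
    prod_sub I L Pf fun t ht => mem_Pf_sub_one (hz t ht)
  have hEQ : Mem (I * I) EQ :=
    prod_sub I L Qf fun t ht => mem_Qf_sub_one (hz t ht)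
  have hP : (L.map Pf).prod = 1 + Sp + EP := by rw [hEPdef]; abel
  have hQ : (L.map Qf).prod = 1 + Sq + EQ := by rw [hEQdef]; abel
  have hid : f * (L.map Pf).prod - (L.map Qf).prod
      = (Sq - Sp) * (Sp + EP) + (EP - EQ) := by
    rw [hf, hT, hP, hQ]; noncomm_ring
  rw [hid]
  refine Mem.add ?_ (hEP.sub hEQ)
  exact (hSq.sub hSp).mul_mem ((hSp.add (hEP.mono Ideal.mul_le_left)) : Mem I _)

theorem exists_list_of_mem (I : Ideal S) (u : MonoidAlgebra S G) :
    (∀ x, u.coeff x ∈ I) → ∃ P : List (S × G), (∀ p ∈ P, p.1 ∈ I) ∧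
      u = (P.map fun p => (MonoidAlgebra.single p.2 p.1 : MonoidAlgebra S G)).sum := by
  classical
  induction u using MonoidAlgebra.induction with
  | zero => exact fun _ => ⟨[], by simp, by simp⟩
  | single_add a b f haf hb ih =>
      intro hu
      have hfa : f.coeff a = 0 := Finsupp.notMem_support_iff.mp haf
      have hfx : ∀ x, f.coeff x ∈ I := by
        intro x
        by_cases hx : x = a
        · rw [hx, hfa]; exact I.zero_mem
        · have := hu x
          rwa [MonoidAlgebra.coeff_add, Finsupp.add_apply, MonoidAlgebra.coeff_single, Finsupp.single_apply,
            if_neg (fun h => hx h.symm), zero_add] at this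
      have hb' : b ∈ I := by
        have := hu a
        rwa [MonoidAlgebra.coeff_add, Finsupp.add_apply, MonoidAlgebra.coeff_single, Finsupp.single_apply, if_pos rfl, hfa, add_zero] at this
      obtain ⟨P, h1, h2⟩ := ih hfx
      refine ⟨(b, a) :: P, ?_, ?_⟩
      · intro p hp
        rcases List.mem_cons.mp hp with h | h
        · rw [h]; exact hb'
        · exact h1 p h
      · rw [List.map_cons, List.sum_cons, ← h2]

theorem exists_list_term (I : Ideal S) (m : ℕ) (u : MonoidAlgebra S G)
    (hu : ∀ x, u.coeff x ∈ I) :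
    ∃ L : List (ℕ × S × G), (∀ t ∈ L, 1 ≤ t.1) ∧ (∀ t ∈ L, t.2.1 ∈ I) ∧
      (Polynomial.X ^ (m + 1) - Polynomial.X ^ (m + 2)) * Polynomial.C u
        = (L.map Tt).sum := by
  obtain ⟨P, hP, hu2⟩ := exists_list_of_mem I u hu
  refine ⟨P.map fun p => (m + 1, p), ?_, ?_, ?_⟩
  · intro t ht; obtain ⟨p, hp, rfl⟩ := List.mem_map.mp ht; exact Nat.le_add_left 1 m
  · intro t ht; obtain ⟨p, hp, rfl⟩ := List.mem_map.mp ht; exact hP p hp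
  · rw [hu2, map_list_sum (Polynomial.C : MonoidAlgebra S G →+* _), List.map_map,
      List.map_map, ← List.sum_map_mul_left]
    exact congrArg List.sum (List.map_congr_left fun p _ => rfl)

theorem exists_list_sum (I : Ideal S) (c : ℕ → MonoidAlgebra S G)
    (hc : ∀ m x, (c m).coeff x ∈ I) (d : ℕ) :
    ∃ L : List (ℕ × S × G), (∀ t ∈ L, 1 ≤ t.1) ∧ (∀ t ∈ L, t.2.1 ∈ I) ∧
      ∑ m ∈ Finset.range d, (Polynomial.X ^ (m + 1) - Polynomial.X ^ (m + 2))
          * Polynomial.C (c m) = (L.map Tt).sum := by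
  induction d with
  | zero => exact ⟨[], by simp, by simp, by simp⟩
  | succ d ih =>
      obtain ⟨L, h1, h2, h3⟩ := ih
      obtain ⟨L', h1', h2', h3'⟩ := exists_list_term I d (c d) (hc d)
      refine ⟨L ++ L', ?_, ?_, ?_⟩
      · intro t ht; rcases List.mem_append.mp ht with h | h
        · exact h1 t h
        · exact h1' t h
      · intro t ht; rcases List.mem_append.mp ht with h | h
        · exact h2 t h
        · exact h2' t h
      · rw [Finset.sum_range_succ, h3, h3', List.map_append, List.sum_append]

theorem telescope (c : ℕ → MonoidAlgebra S G) (d : ℕ) :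
    ∑ m ∈ Finset.range d, (Polynomial.X ^ (m + 1) - Polynomial.X ^ (m + 2))
        * Polynomial.C (∑ n ∈ Finset.range (m + 1), c n)
      = (∑ n ∈ Finset.range d, Polynomial.X ^ (n + 1) * Polynomial.C (c n))
        - Polynomial.X ^ (d + 1) * Polynomial.C (∑ n ∈ Finset.range d, c n) := by
  induction d with
  | zero => simp
  | succ d ih =>
      rw [Finset.sum_range_succ, ih,
        Finset.sum_range_succ (f := fun n => Polynomial.X ^ (n + 1) * Polynomial.C (c n)),
        Finset.sum_range_succ (f := c), map_add]
      simp only [sub_mul, mul_add]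
      abel

theorem exists_decomp (I : Ideal S) (f : Polynomial (MonoidAlgebra S G))
    (hconst : f.coeff 0 = 1)
    (hfI : ∀ (n : ℕ) (x : G), ((f - 1).coeff n).coeff x ∈ I)
    (heval : f.eval 1 = 1) :
    ∃ L : List (ℕ × S × G), (∀ t ∈ L, 1 ≤ t.1) ∧ (∀ t ∈ L, t.2.1 ∈ I) ∧
      f = 1 + (L.map Tt).sum := by
  classical
  set d := f.natDegree with hd
  set c : ℕ → MonoidAlgebra S G := fun n => f.coeff (n + 1) with hcdef
  have hc : ∀ m x, (c m).coeff x ∈ I := by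
    intro m x
    have h1 : (f - 1).coeff (m + 1) = f.coeff (m + 1) := by
      rw [Polynomial.coeff_sub, Polynomial.coeff_one, if_neg (Nat.succ_ne_zero m), sub_zero]
    have := hfI (m + 1) x
    rwa [h1] at this
  have hcsum : ∀ m x, (∑ n ∈ Finset.range (m + 1), c n).coeff x ∈ I := by
    intro m x
    rw [MonoidAlgebra.coeff_sum, Finset.sum_apply']
    exact Ideal.sum_mem _ fun n _ => hc n x
  have hsum0 : ∑ n ∈ Finset.range d, c n = 0 := by
    have he : f.eval 1 = ∑ i ∈ Finset.range (d + 1), f.coeff i := by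
      rw [Polynomial.eval_eq_sum_range]
      exact Finset.sum_congr rfl fun i _ => by rw [one_pow, mul_one]
    have he2 : ∑ i ∈ Finset.range (d + 1), f.coeff i
        = (∑ i ∈ Finset.range d, c i) + f.coeff 0 := Finset.sum_range_succ' _ _
    rw [heval, he2, hconst] at he
    have := he.symm
    rwa [← eq_sub_iff_add_eq, sub_self] at this
  have hdecomp : f = 1 + ∑ m ∈ Finset.range d,
      (Polynomial.X ^ (m + 1) - Polynomial.X ^ (m + 2))
        * Polynomial.C (∑ n ∈ Finset.range (m + 1), c n) := by
    rw [telescope c d, hsum0, map_zero, mul_zero, sub_zero]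
    conv_lhs => rw [Polynomial.as_sum_range f]
    rw [Finset.sum_range_succ' (fun i => (Polynomial.monomial i) (f.coeff i)) d]
    rw [hconst, Polynomial.monomial_zero_left, Polynomial.C_1, add_comm]
    congr 1
    exact Finset.sum_congr rfl fun n _ => by
      rw [Polynomial.X_pow_mul, Polynomial.C_mul_X_pow_eq_monomial]
  obtain ⟨L, h1, h2, h3⟩ := exists_list_sum I
    (fun m => ∑ n ∈ Finset.range (m + 1), c n) hcsum d
  exact ⟨L, h1, h2, by rw [hdecomp, h3]⟩

theorem isUnit_Qf {I : Ideal S} {N : ℕ} (hInil : I ^ N = ⊥) {t : ℕ × S × G}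
    (hz : t.2.1 ∈ I) : IsUnit (Qf t) := by
  have hzN : t.2.1 ^ N = 0 := Ideal.mem_bot.mp (hInil ▸ Ideal.pow_mem_pow hz N)
  have hnil : IsNilpotent (Polynomial.X ^ (t.1 + 1)
      * Polynomial.C (MonoidAlgebra.single t.2.2 t.2.1)) := by
    refine ⟨N, ?_⟩
    have hcomm : Commute (Polynomial.X ^ (t.1 + 1) : Polynomial (MonoidAlgebra S G))
        (Polynomial.C (MonoidAlgebra.single t.2.2 t.2.1)) := Polynomial.X_pow_mul
    rw [hcomm.mul_pow, ← Polynomial.C_pow, MonoidAlgebra.single_pow, hzN]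
    simp
  exact hnil.isUnit_one_sub

theorem prod_coeff_zero (L : List (Polynomial (MonoidAlgebra S G)))
    (h : ∀ p ∈ L, p.coeff 0 = 1) : L.prod.coeff 0 = 1 := by
  induction L with
  | nil => simp
  | cons p L ih =>
      rw [List.prod_cons, Polynomial.mul_coeff_zero, h p (by simp),
        ih fun q hq => h q (by simp [hq]), one_mul]

theorem coeff_zero_XpowC (a : ℕ) (ha : 1 ≤ a) (r : MonoidAlgebra S G) :
    (Polynomial.X ^ a * Polynomial.C r).coeff 0 = 0 := by
  rw [Polynomial.X_pow_mul, Polynomial.C_mul_X_pow_eq_monomial, Polynomial.coeff_monomial,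
    if_neg (by omega)]

theorem coeff_zero_Pf {t : ℕ × S × G} (ht : 1 ≤ t.1) : (Pf t).coeff 0 = 1 := by
  rw [Pf, Polynomial.coeff_sub, coeff_zero_XpowC t.1 ht, Polynomial.coeff_one, if_pos rfl,
    sub_zero]

theorem coeff_zero_Qf (t : ℕ × S × G) : (Qf t).coeff 0 = 1 := by
  rw [Qf, Polynomial.coeff_sub, coeff_zero_XpowC (t.1 + 1) (by omega), Polynomial.coeff_one,
    if_pos rfl, sub_zero]

theorem main_lemma : ∀ N : ℕ, 1 ≤ N → ∀ I : Ideal S, I ^ N = ⊥ →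
    ∀ f : Polynomial (MonoidAlgebra S G), f.coeff 0 = 1 →
      (∀ (n : ℕ) (x : G), ((f - 1).coeff n).coeff x ∈ I) → f.eval 1 = 1 →
      ∃ L : List (ℕ × S × G), (∀ t ∈ L, 1 ≤ t.1) ∧ (∀ t ∈ L, t.2.1 ∈ I) ∧
        f * (L.map Pf).prod = (L.map Qf).prod := by
  intro N
  induction N using Nat.strong_induction_on with
  | _ N IH =>
    intro hN I hInil f hconst hfI heval
    by_cases hN1 : N = 1
    · -- base case : I = ⊥, so f = 1
      subst hN1
      rw [pow_one] at hInil
      subst hInil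
      have hf1 : f = 1 := by
        have : f - 1 = 0 := by
          ext n x
          · exact Ideal.mem_bot.mp (hfI n x)
        rw [sub_eq_zero] at this
        exact this
      exact ⟨[], by simp, by simp, by simp [hf1]⟩
    · have hN2 : 2 ≤ N := by omega
      obtain ⟨L0, hA0, hZ0, hdec⟩ := exists_decomp I f hconst hfI heval
      set P := (L0.map Pf).prod with hPdef
      set Q := (L0.map Qf).prod with hQdef
      have hQu : IsUnit Q := by
        refine List.prod_isUnit ?_
        intro q hq
        obtain ⟨t, ht, rfl⟩ := List.mem_map.mp hq
        exact isUnit_Qf hInil (hZ0 t ht)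
      set u := hQu.unit with hudef
      set f' := (↑u⁻¹ : Polynomial (MonoidAlgebra S G)) * (f * P) with hf'def
      have huQ : (↑u : Polynomial (MonoidAlgebra S G)) = Q := hQu.unit_spec
      have hQf' : Q * f' = f * P := by
        rw [hf'def, ← mul_assoc, ← huQ, u.mul_inv, one_mul]
      -- constant coefficients
      have hP0 : P.coeff 0 = 1 := by
        refine prod_coeff_zero _ ?_
        intro p hp
        obtain ⟨t, ht, rfl⟩ := List.mem_map.mp hp
        exact coeff_zero_Pf (hA0 t ht)
      have hQ0 : Q.coeff 0 = 1 := by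
        refine prod_coeff_zero _ ?_
        intro p hp
        obtain ⟨t, ht, rfl⟩ := List.mem_map.mp hp
        exact coeff_zero_Qf t
      have huinv0 : (↑u⁻¹ : Polynomial (MonoidAlgebra S G)).coeff 0 = 1 := by
        have := congrArg (fun p : Polynomial (MonoidAlgebra S G) => p.coeff 0) u.inv_mul
        simp only [Polynomial.mul_coeff_zero] at this
        rwa [huQ, hQ0, mul_one, Polynomial.coeff_one, if_pos rfl] at this
      have hconst' : f'.coeff 0 = 1 := by
        rw [hf'def, Polynomial.mul_coeff_zero, Polynomial.mul_coeff_zero, huinv0, hconst,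
          hP0, one_mul, one_mul]
      -- congruence mod I^2
      have hkey : Mem (I * I) (f * P - Q) := key_congruence I f L0 hZ0 hdec
      have hf'I : ∀ (n : ℕ) (x : G), ((f' - 1).coeff n).coeff x ∈ I ^ 2 := by
        have hid : f' - 1 = (↑u⁻¹ : Polynomial (MonoidAlgebra S G)) * (f * P - Q) := by
          rw [mul_sub, ← hf'def]
          congr 1
          rw [← huQ, u.inv_mul]
        intro n x
        rw [hid, pow_two]
        exact Mem.mul_left _ hkey n x
      -- evaluation at 1
      have heval' : f'.eval 1 = 1 := by
        set φ := Polynomial.eval₂RingHom' (RingHom.id (MonoidAlgebra S G)) 1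
          (fun a => Commute.one_right a) with hφdef
        have hφeval : ∀ p : Polynomial (MonoidAlgebra S G), φ p = p.eval 1 := fun p => rfl
        have hφX : φ Polynomial.X = 1 := Polynomial.eval₂_X _ _
        have hφfac : ∀ t : ℕ × S × G, φ (Pf t) = φ (Qf t) := by
          intro t
          rw [Pf, Qf, map_sub, map_sub, map_one, map_mul, map_mul, map_pow, map_pow, hφX,
            one_pow, one_pow]
        have hPQ : φ P = φ Q := by
          rw [hPdef, hQdef, map_list_prod, map_list_prod, List.map_map, List.map_map]
          exact congrArg List.prod (List.map_congr_left fun t _ => hφfac t)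
        have hval : φ (↑u⁻¹ : Polynomial (MonoidAlgebra S G)) * φ Q = 1 := by
          rw [← map_mul, ← huQ, u.inv_mul, map_one]
        rw [← hφeval, hf'def, map_mul, map_mul, hφeval f, heval, one_mul, hPQ, hval]
      -- nilpotency of I ^ 2
      have hI2 : (I ^ 2) ^ (N - 1) = ⊥ := by
        rw [← pow_mul]
        have h1 : I ^ (2 * (N - 1)) ≤ I ^ N := Ideal.pow_le_pow_right (by omega)
        rw [hInil] at h1
        exact le_bot_iff.mp h1
      obtain ⟨L1, hA1, hZ1, heq1⟩ :=
        IH (N - 1) (by omega) (by omega) (I ^ 2) hI2 f' hconst' hf'I heval'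
      refine ⟨L0 ++ L1, ?_, ?_, ?_⟩
      · intro t ht
        rcases List.mem_append.mp ht with h | h
        exacts [hA0 t h, hA1 t h]
      · intro t ht
        rcases List.mem_append.mp ht with h | h
        · exact hZ0 t h
        · exact Ideal.pow_le_self two_ne_zero (hZ1 t h)
      · rw [List.map_append, List.prod_append, List.map_append, List.prod_append,
          ← hPdef, ← hQdef]
        calc f * (P * (L1.map Pf).prod) = (f * P) * (L1.map Pf).prod := by rw [mul_assoc]
          _ = (Q * f') * (L1.map Pf).prod := by rw [hQf']
          _ = Q * (f' * (L1.map Pf).prod) := by rw [mul_assoc]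
          _ = Q * (L1.map Qf).prod := by rw [heq1]

end Stmt13Aux

open Stmt13Aux in
/-- Let `S` be a commutative ring, `G` a group, `I ⊆ S` a nilpotent ideal, and
`f ∈ S[G][U]` a polynomial with constant term `1`, with `f ≡ 1 mod I`, and with
`f(1) = 1`.  Then `f` is a finite product of the units
`(1 − U^{a+1} z g)·(1 − U^a z g)^{−1}` with `a ≥ 1`, `z ∈ I`, `g ∈ G`; equivalently,
`f · ∏_j (1 − U^{a_j} z_j g_j) = ∏_j (1 − U^{a_j+1} z_j g_j)` for suitable finitely many
triples `(a_j, z_j, g_j)`. -/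
theorem stmt_13 (S : Type*) [CommRing S] (G : Type*) [Group G]
    (I : Ideal S) (N : ℕ) (hN : 1 ≤ N) (hInil : I ^ N = ⊥)
    (f : Polynomial (MonoidAlgebra S G))
    (hconst : f.coeff 0 = 1)
    (hfI : ∀ (n : ℕ) (x : G), ((f - 1).coeff n).coeff x ∈ I)
    (heval : f.eval 1 = 1) :
    ∃ (k : ℕ) (a : Fin k → ℕ) (z : Fin k → S) (gg : Fin k → G),
      (∀ j, 1 ≤ a j) ∧ (∀ j, z j ∈ I) ∧
      f * (List.ofFn fun j =>
          (1 - Polynomial.X ^ (a j) *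
            Polynomial.C (MonoidAlgebra.single (gg j) (z j)))).prod =
        (List.ofFn fun j =>
          (1 - Polynomial.X ^ (a j + 1) *
            Polynomial.C (MonoidAlgebra.single (gg j) (z j)))).prod := by
  obtain ⟨L, hA, hZ, heq⟩ := Stmt13Aux.main_lemma N hN I hInil f hconst hfI heval
  refine ⟨L.length, fun j => (L.get j).1, fun j => (L.get j).2.1, fun j => (L.get j).2.2,
    fun j => hA _ (L.get_mem j), fun j => hZ _ (L.get_mem j), ?_⟩
  have e1 : (List.ofFn fun j => Stmt13Aux.Pf (S := S) (G := G) (L.get j)) = L.map Stmt13Aux.Pf := by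
    have h := (List.map_ofFn (f := L.get) (g := Stmt13Aux.Pf (S := S) (G := G))).symm
    rw [List.ofFn_get] at h
    exact h
  have e2 : (List.ofFn fun j => Stmt13Aux.Qf (S := S) (G := G) (L.get j)) = L.map Stmt13Aux.Qf := by
    have h := (List.map_ofFn (f := L.get) (g := Stmt13Aux.Qf (S := S) (G := G))).symm
    rw [List.ofFn_get] at h
    exact h
  show f * (List.ofFn fun j => Stmt13Aux.Pf (L.get j)).prod
      = (List.ofFn fun j => Stmt13Aux.Qf (L.get j)).prod
  rw [e1, e2, heq]
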